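/- Every simple-pole (a,b)-module E given by a single generator e_S with a·e_S = b·S(b)·e_S for some S ∈ ℂ[[b]] is isomorphic (as an (a,b)-module) to E_λ with λ = S(0), where E_λ = ℂ[[b]]·e_λ with a·e_λ = λ·b·e_λ. -/

import Mathlib

set_option synthInstance.maxHeartbeats 1000000
set_option maxHeartbeats 1000000

open PowerSeries

noncomputable section

/-- coefficients of the solution of `u' = u * Q`, `u(0) = 1`. -/
noncomputable def solCoeff (Q : ℕ → ℂ) : ℕ → ℂ
  | 0 => 1
  | (n+1) => ((n : ℂ)+1)⁻¹ *
      ∑ i ∈ (Finset.range (n+1)).attach, solCoeff Q i.1 * Q (n - i.1)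
  termination_by n => n
  decreasing_by exact Finset.mem_range.mp i.2

theorem solCoeff_succ (Q : ℕ → ℂ) (n : ℕ) :
    solCoeff Q (n+1) = ((n : ℂ)+1)⁻¹ * ∑ i ∈ Finset.range (n+1), solCoeff Q i * Q (n - i) := by
  rw [solCoeff]
  congr 1
  exact Finset.sum_attach (Finset.range (n+1)) (fun i => solCoeff Q i * Q (n - i))

theorem solODE (Q : PowerSeries ℂ) :
    derivative ℂ (mk (solCoeff (fun n => coeff n Q))) =
      mk (solCoeff (fun n => coeff n Q)) * Q := by
  ext n
  rw [coeff_derivative, coeff_mk, coeff_mul, solCoeff_succ,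
    Finset.Nat.sum_antidiagonal_eq_sum_range_succ_mk]
  simp only [coeff_mk]
  rw [mul_comm, ← mul_assoc, mul_inv_cancel₀ (Nat.cast_add_one_ne_zero n),
    one_mul]

theorem stmt_5 (S : PowerSeries ℂ) :
    ∃ φ : PowerSeries ℂ ≃ₗ[PowerSeries ℂ] PowerSeries ℂ,
      ∀ T : PowerSeries ℂ,
        φ (X * S * T + X ^ 2 * derivative ℂ T) =
          (PowerSeries.C (constantCoeff S)) * X * (φ T) +
            X ^ 2 * derivative ℂ (φ T) := by
  set lam := constantCoeff S with hlam
  obtain ⟨Q, hQ⟩ : (X : PowerSeries ℂ) ∣ (S - PowerSeries.C lam) := by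
    rw [PowerSeries.X_dvd_iff]; simp [hlam]
  set u : PowerSeries ℂ := mk (solCoeff (fun n => coeff n Q)) with hu
  have hu' : derivative ℂ u = u * Q := solODE Q
  have hunit : IsUnit u := by
    rw [PowerSeries.isUnit_iff_constantCoeff]
    have : constantCoeff u = 1 := by
      rw [← coeff_zero_eq_constantCoeff_apply, hu, coeff_mk, solCoeff]
    rw [this]; exact isUnit_one
  obtain ⟨v, hv⟩ := hunit
  refine ⟨{
    toFun := fun T => u * T
    invFun := fun T => (↑v⁻¹ : PowerSeries ℂ) * T
    map_add' := fun a b => mul_add u a b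
    map_smul' := fun r a => by simp [smul_eq_mul]; ring
    left_inv := fun T => by show (↑v⁻¹ : PowerSeries ℂ) * (u * T) = T; rw [← mul_assoc, ← hv, Units.inv_mul, one_mul]
    right_inv := fun T => by show u * ((↑v⁻¹ : PowerSeries ℂ) * T) = T; rw [← hv, ← mul_assoc, Units.mul_inv, one_mul] }, ?_⟩
  intro T
  simp only [LinearEquiv.coe_mk, LinearMap.coe_mk, AddHom.coe_mk]
  have hder : derivative ℂ (u * T) = u * derivative ℂ T + T * derivative ℂ u :=
    Derivation.leibniz _ u T
  have hS : S = PowerSeries.C lam + X * Q := by rw [← hQ]; ring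
  rw [hder, hu', hS]
  ring
end
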